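/- For a linear subspace S of M_n(ℂ), the k-reflexive cover satisfies Ref_k(S) = (S_⊥ ∩ F_k)_⊥, where S_⊥ = {C ∈ M_n : tr(CS) = 0 for all S ∈ S}, F_k is the set of matrices of rank at most k, and (S_⊥ ∩ F_k)_⊥ = {T ∈ M_n : tr(TC) = 0 for all C ∈ S_⊥ ∩ F_k}. -/

import Mathlib

open Matrix

/-- The trace-pairing annihilator of a set of matrices. -/
def annih {α β : Type*} [Fintype α] [Fintype β] (S : Set (Matrix α β ℂ)) :
    Set (Matrix β α ℂ) := {C | ∀ A ∈ S, (C * A).trace = 0}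

/-- The algebraic `k`-reflexive cover `(S_⊥ ∩ F_k)_⊥`. -/
noncomputable def RefK {α β : Type*} [Fintype α] [Fintype β] (k : ℕ)
    (S : Set (Matrix α β ℂ)) : Set (Matrix α β ℂ) :=
  annih {C | C ∈ annih S ∧ C.rank ≤ k}

/-- The `k`-reflexivity defect. -/
noncomputable def rdK {α β : Type*} [Fintype α] [Fintype β] (k : ℕ)
    (S : Set (Matrix α β ℂ)) : ℕ :=
  Module.finrank ℂ (Submodule.span ℂ (RefK k S)) -
    Module.finrank ℂ (Submodule.span ℂ S)

/-- The `m × m` Jordan block with eigenvalue `lam`. -/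
def JB (m : ℕ) (lam : ℂ) : Matrix (Fin m) (Fin m) ℂ :=
  Matrix.of fun i j => if (j : ℕ) = (i : ℕ) + 1 then 1 else if j = i then lam else 0

/-- Upper triangular Toeplitz matrices: entry `(i,j)` depends only on `j - i`,
and vanishes when `j < i`. -/
def UTToeplitz (m : ℕ) : Set (Matrix (Fin m) (Fin m) ℂ) :=
  {C | (∀ i j : Fin m, (j : ℕ) < (i : ℕ) → C i j = 0) ∧
    ∀ i j i' j' : Fin m, (i : ℕ) + (j' : ℕ) = (i' : ℕ) + (j : ℕ) → C i j = C i' j'}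

lemma sum_rot {α β γ : Type*} [Fintype α] [Fintype β] [Fintype γ] (g : α → β → γ → ℂ) :
    ∑ a, ∑ b, ∑ c, g a b c = ∑ c, ∑ b, ∑ a, g a b c := by
  calc ∑ a, ∑ b, ∑ c, g a b c = ∑ b, ∑ a, ∑ c, g a b c := Finset.sum_comm
    _ = ∑ b, ∑ c, ∑ a, g a b c := Finset.sum_congr rfl fun b _ => Finset.sum_comm
    _ = ∑ c, ∑ b, ∑ a, g a b c := Finset.sum_comm

lemma trace_aux {n k : ℕ} (x y : Fin k → Fin n → ℂ) (A : Matrix (Fin n) (Fin n) ℂ) :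
    ((Matrix.of fun j a => ∑ i, x i j * y i a) * A).trace
      = ∑ i, ∑ a, y i a * (A.mulVec (x i)) a := by
  simp only [Matrix.trace, Matrix.diag, Matrix.mul_apply, Matrix.of_apply,
    Matrix.mulVec, dotProduct, Finset.sum_mul, Finset.mul_sum]
  rw [sum_rot]
  apply Finset.sum_congr rfl
  intro i _
  apply Finset.sum_congr rfl
  intro a _
  apply Finset.sum_congr rfl
  intro j _
  ring

lemma rank_aux {n k : ℕ} (x y : Fin k → Fin n → ℂ) :
    (Matrix.of fun j a => ∑ i, x i j * y i a).rank ≤ k := by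
  have hsub : LinearMap.range (Matrix.of fun j a => ∑ i, x i j * y i a).mulVecLin
      ≤ Submodule.span ℂ (Set.range x) := by
    rintro w ⟨v, rfl⟩
    have h : (Matrix.of fun j a => ∑ i, x i j * y i a).mulVecLin v
        = ∑ i, (∑ a, y i a * v a) • x i := by
      funext j
      simp only [Matrix.mulVecLin_apply, Matrix.mulVec, dotProduct,
        Matrix.of_apply, Finset.sum_mul, Finset.sum_apply, Pi.smul_apply,
        smul_eq_mul, Finset.mul_sum]
      rw [Finset.sum_comm]
      apply Finset.sum_congr rfl
      intro i _
      apply Finset.sum_congr rfl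
      intro a _
      ring
    rw [h]
    exact Submodule.sum_mem _ fun i _ =>
      Submodule.smul_mem _ _ (Submodule.subset_span ⟨i, rfl⟩)
  calc (Matrix.of fun j a => ∑ i, x i j * y i a).rank
      ≤ Module.finrank ℂ (Submodule.span ℂ (Set.range x)) := Submodule.finrank_mono hsub
    _ ≤ Fintype.card (Fin k) := finrank_range_le_card x
    _ = k := Fintype.card_fin k

/-- for a linear subspace `S` of `M_n(ℂ)`, the metric `k`-reflexive
cover equals `(S_⊥ ∩ F_k)_⊥`. -/
theorem refk_eq_annih_inter_rank (n k : ℕ) (hn : 0 < n) (hk : 0 < k)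
    (S : Submodule ℂ (Matrix (Fin n) (Fin n) ℂ)) :
    {T : Matrix (Fin n) (Fin n) ℂ | ∀ ε > (0 : ℝ), ∀ x : Fin k → EuclideanSpace ℂ (Fin n),
        ∃ S₀ ∈ (S : Set (Matrix (Fin n) (Fin n) ℂ)), ∀ i : Fin k,
          ‖T.mulVec (x i) - S₀.mulVec (x i)‖ < ε} =
      RefK k (S : Set (Matrix (Fin n) (Fin n) ℂ)) := by
  ext T
  simp only [Set.mem_setOf_eq]
  constructor
  · intro hT

    classical
    rintro C ⟨hC1, hC2⟩
    -- decompose C using a basis of its column space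
    set W := LinearMap.range C.mulVecLin with hW
    have hcolmem : ∀ a : Fin n, (fun j => C j a) ∈ W := by
      intro a
      refine ⟨Pi.single a 1, ?_⟩
      funext j
      simp [Matrix.mulVecLin_apply, Matrix.mulVec, dotProduct, Pi.single_apply]
    set col : Fin n → W := fun a => ⟨fun j => C j a, hcolmem a⟩ with hcol
    have hrank : Module.finrank ℂ W = C.rank := rfl
    set r := C.rank with hr
    have hrk : r ≤ k := hC2
    let b : Module.Basis (Fin r) ℂ W := (Module.finBasis ℂ W).reindex (finCongr hrank)
    set xN : ℕ → (Fin n → ℂ) := fun i => if h : i < r then ((b ⟨i, h⟩ : W) : Fin n → ℂ) else 0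
      with hxN
    set yN : ℕ → (Fin n → ℂ) := fun i a => if h : i < r then b.repr (col a) ⟨i, h⟩ else 0
      with hyN
    have hCdecomp : C = Matrix.of fun j a => ∑ i : Fin k, xN i j * yN i a := by
      ext j a
      show C j a = ∑ i : Fin k, xN (i : ℕ) j * yN (i : ℕ) a
      rw [Fin.sum_univ_eq_sum_range (fun i => xN i j * yN i a) k]
      rw [← Finset.sum_subset (Finset.range_subset_range.2 hrk) (by
        intro i _ hi
        simp only [Finset.mem_range, not_lt] at hi
        simp [hxN, dif_neg (not_lt.2 hi)])]
      rw [← Fin.sum_univ_eq_sum_range (fun i => xN i j * yN i a) r]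
      have hbr := b.sum_repr (col a)
      have := congrArg (fun w : W => (w : Fin n → ℂ) j) hbr
      simp only [AddSubmonoidClass.coe_finset_sum, Finset.sum_apply, SetLike.val_smul,
        Pi.smul_apply, smul_eq_mul] at this
      calc C j a = ((col a : W) : Fin n → ℂ) j := rfl
        _ = ∑ i : Fin r, b.repr (col a) i * ((b i : W) : Fin n → ℂ) j := this.symm
        _ = ∑ i : Fin r, xN (i : ℕ) j * yN (i : ℕ) a := by
            apply Finset.sum_congr rfl
            intro i _
            rw [hxN, hyN]
            simp only [dif_pos i.isLt, Fin.eta]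
            ring
    -- now the approximation argument
    set x : Fin k → EuclideanSpace ℂ (Fin n) := fun i => WithLp.toLp 2 (xN i) with hx
    set M : ℝ := ∑ i : Fin k, ∑ a, ‖yN (i : ℕ) a‖ with hM
    have hM0 : 0 ≤ M := Finset.sum_nonneg fun i _ => Finset.sum_nonneg fun a _ => norm_nonneg _
    rw [Matrix.trace_mul_comm]
    have key : ∀ ε > (0:ℝ), ‖(C * T).trace‖ ≤ (M + 1) * ε := by
      intro ε hε
      obtain ⟨S₀, hS₀, hclose⟩ := hT ε hε x
      have hCS₀ : (C * S₀).trace = 0 := hC1 S₀ hS₀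
      have hsplit : (C * T).trace = ∑ i : Fin k, ∑ a, yN (i:ℕ) a *
          (T.mulVec (xN i) a - S₀.mulVec (xN i) a) := by
        have h1 : (C * T).trace = ∑ i : Fin k, ∑ a, yN (i:ℕ) a * (T.mulVec (xN i)) a := by
          rw [hCdecomp]; exact trace_aux _ _ T
        have h2 : (0:ℂ) = ∑ i : Fin k, ∑ a, yN (i:ℕ) a * (S₀.mulVec (xN i)) a := by
          rw [← hCS₀, hCdecomp]; exact (trace_aux _ _ S₀)
        rw [h1, ← sub_zero (∑ i : Fin k, ∑ a, yN (i:ℕ) a * (T.mulVec (xN i)) a), h2,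
          ← Finset.sum_sub_distrib]
        apply Finset.sum_congr rfl; intro i _
        rw [← Finset.sum_sub_distrib]
        apply Finset.sum_congr rfl; intro a _
        ring
      rw [hsplit]
      calc ‖∑ i : Fin k, ∑ a, yN (i:ℕ) a * (T.mulVec (xN i) a - S₀.mulVec (xN i) a)‖
          ≤ ∑ i : Fin k, ‖∑ a, yN (i:ℕ) a * (T.mulVec (xN i) a - S₀.mulVec (xN i) a)‖ :=
            norm_sum_le _ _
        _ ≤ ∑ i : Fin k, ∑ a, ‖yN (i:ℕ) a * (T.mulVec (xN i) a - S₀.mulVec (xN i) a)‖ :=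
            Finset.sum_le_sum fun i _ => norm_sum_le _ _
        _ ≤ ∑ i : Fin k, ∑ a, ‖yN (i:ℕ) a‖ * ε := by
            apply Finset.sum_le_sum; intro i _
            apply Finset.sum_le_sum; intro a _
            rw [norm_mul]
            apply mul_le_mul_of_nonneg_left _ (norm_nonneg _)
            calc ‖T.mulVec (xN i) a - S₀.mulVec (xN i) a‖
                = ‖(T.mulVec (x i) - S₀.mulVec (x i)) a‖ := rfl
              _ ≤ ‖T.mulVec (x i) - S₀.mulVec (x i)‖ := norm_le_pi_norm _ a
              _ ≤ ε := (hclose i).le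
        _ = M * ε := by
            rw [hM, Finset.sum_mul]
            exact Finset.sum_congr rfl fun i _ => (Finset.sum_mul _ _ _).symm
        _ ≤ (M + 1) * ε := by nlinarith
    have hnorm : ‖(C * T).trace‖ ≤ 0 := by
      refine le_of_forall_pos_le_add ?_
      intro ε hε
      have := key (ε / (M + 1)) (by positivity)
      rw [mul_div_cancel₀ _ (by positivity : (M:ℝ) + 1 ≠ 0)] at this
      linarith
    simpa using norm_le_zero_iff.1 hnorm
  · intro hT ε hε x

    classical
    set Φ : Matrix (Fin n) (Fin n) ℂ →ₗ[ℂ] (Fin k → Fin n → ℂ) :=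
      { toFun := fun A => fun i => A.mulVec (x i)
        map_add' := fun A B => by funext i; exact Matrix.add_mulVec A B (x i)
        map_smul' := fun c A => by funext i; exact Matrix.smul_mulVec c A (x i) } with hΦ
    by_cases hmem : Φ T ∈ S.map Φ
    · obtain ⟨S₀, hS₀, hEq⟩ := hmem
      refine ⟨S₀, hS₀, fun i => ?_⟩
      have h : S₀.mulVec (x i) = T.mulVec (x i) := congrFun hEq i
      rw [h, sub_self, norm_zero]
      exact hε
    · exfalso
      obtain ⟨f, hf0, hker⟩ := (S.map Φ).exists_dual_map_eq_bot_of_notMem hmem inferInstance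
      have hzero : ∀ A ∈ S, f (Φ A) = 0 := by
        intro A hA
        have : f (Φ A) ∈ (S.map Φ).map f :=
          Submodule.mem_map_of_mem (Submodule.mem_map_of_mem hA)
        rw [hker] at this
        simpa using this
      set y : Fin k → Fin n → ℂ := fun i b => f (Pi.single i (Pi.single b 1)) with hy
      have hf : ∀ v : Fin k → Fin n → ℂ, f v = ∑ i, ∑ b, v i b * y i b := by
        intro v
        have hv : v = ∑ i, ∑ b, (v i b) • (Pi.single i (Pi.single b (1:ℂ)) : Fin k → Fin n → ℂ) := by
          funext i' b'
          simp [Finset.sum_apply, ite_apply, Pi.single_apply, smul_eq_mul,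
            Finset.sum_ite_eq, Finset.sum_ite_eq']
        conv_lhs => rw [hv]
        simp [map_sum, _root_.map_smul, smul_eq_mul, hy]
      set C : Matrix (Fin n) (Fin n) ℂ :=
        Matrix.of fun j a => ∑ i, (x i : Fin n → ℂ) j * y i a with hC
      have hCann : C ∈ annih (S : Set (Matrix (Fin n) (Fin n) ℂ)) := by
        intro A hA
        rw [hC, trace_aux]
        have := hzero A hA
        rw [hf] at this
        rw [← this]
        apply Finset.sum_congr rfl; intro i _
        apply Finset.sum_congr rfl; intro a _
        have : Φ A i = A.mulVec (x i) := rfl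
        rw [this]; ring
      have hCrank : C.rank ≤ k := rank_aux _ _
      have hTr : (T * C).trace = 0 := hT C ⟨hCann, hCrank⟩
      apply hf0
      rw [hf]
      rw [Matrix.trace_mul_comm] at hTr
      rw [hC, trace_aux] at hTr
      rw [← hTr]
      apply Finset.sum_congr rfl; intro i _
      apply Finset.sum_congr rfl; intro a _
      have : Φ T i = T.mulVec (x i) := rfl
      rw [this]; ring
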